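/- Define polynomials q_k, r_k ∈ F_p[x,y] by q_1 = −∂P/∂x, r_1 = ∂P/∂y, and q_{k+1} = (∂q_k/∂x)(∂P/∂y)^2 − (∂q_k/∂y)(∂P/∂x)(∂P/∂y) − (2k−1)q_k(∂²P/∂x∂y)(∂P/∂y) + (2k−1)q_k(∂²P/∂y²)(∂P/∂x), r_{k+1} = r_k·(∂P/∂y)^2. Then for all k ≥ 1: deg_x q_k ≤ (2k−1)m − k, deg_y q_k ≤ (2k−1)n − k + 1, deg_x r_k ≤ (2k−1)m, and deg_y r_k ≤ (2k−1)(n−1). -/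

import Mathlib

open MvPolynomial

lemma degreeOf_monomial_le' {σ R : Type*} [CommSemiring R] (s : σ →₀ ℕ) (i : σ) (a : R) :
    degreeOf i (monomial s a) ≤ s i := by
  classical
  by_cases h : a = 0
  · simp [h]
  · exact le_of_eq (degreeOf_monomial_eq s i h)

lemma degreeOf_pderiv_le' {σ R : Type*} [DecidableEq σ] [CommSemiring R] (i j : σ)
    (f : MvPolynomial σ R) : degreeOf j (pderiv i f) ≤ degreeOf j f := by
  conv_lhs => rw [f.as_sum]
  rw [map_sum]
  refine (degreeOf_sum_le _ _ _).trans (Finset.sup_le fun s hs => ?_)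
  rw [pderiv_monomial]
  refine le_trans ((degreeOf_monomial_le' _ _ _).trans ?_) (monomial_le_degreeOf j hs)
  rw [Finsupp.tsub_apply]
  exact tsub_le_self

lemma degreeOf_pderiv_self_le' {σ R : Type*} [DecidableEq σ] [CommSemiring R] (i : σ)
    (f : MvPolynomial σ R) : degreeOf i (pderiv i f) ≤ degreeOf i f - 1 := by
  conv_lhs => rw [f.as_sum]
  rw [map_sum]
  refine (degreeOf_sum_le _ _ _).trans (Finset.sup_le fun s hs => ?_)
  rw [pderiv_monomial]
  refine (degreeOf_monomial_le' _ _ _).trans ?_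
  rw [Finsupp.tsub_apply, Finsupp.single_eq_same]
  exact Nat.sub_le_sub_right (monomial_le_degreeOf i hs) 1

lemma degreeOf_smul_le' {σ R : Type*} [CommSemiring R] (c : R) (f : MvPolynomial σ R) (i : σ) :
    degreeOf i (c • f) ≤ degreeOf i f := by
  rw [smul_eq_C_mul]
  exact degreeOf_C_mul_le f i c

lemma degreeOf_mul3_le' {σ R : Type*} [CommSemiring R] (i : σ) (f g h : MvPolynomial σ R) :
    degreeOf i (f * g * h) ≤ degreeOf i f + degreeOf i g + degreeOf i h :=
  (degreeOf_mul_le _ _ _).trans (Nat.add_le_add_right (degreeOf_mul_le _ _ _) _)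

lemma pderiv_eq_zero_of_degreeOf_eq_zero' {σ R : Type*} [DecidableEq σ] [CommSemiring R]
    (i : σ) (f : MvPolynomial σ R) (h : degreeOf i f = 0) : pderiv i f = 0 := by
  apply pderiv_eq_zero_of_notMem_vars
  intro hv
  obtain ⟨d, hd, hid⟩ := (mem_vars i).1 hv
  have h1 := monomial_le_degreeOf i hd
  have h2 : 1 ≤ d i := Nat.pos_of_ne_zero (Finsupp.mem_support_iff.1 hid)
  omega

lemma deg_comb' {σ R : Type*} [CommRing R] (i : σ) (A B C D : MvPolynomial σ R) (t : ℕ)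
    (hA : degreeOf i A ≤ t) (hB : degreeOf i B ≤ t) (hC : degreeOf i C ≤ t)
    (hD : degreeOf i D ≤ t) : degreeOf i (A - B - C + D) ≤ t :=
  (degreeOf_add_le _ _ _).trans (max_le ((degreeOf_sub_le _ _ _).trans
    (max_le ((degreeOf_sub_le _ _ _).trans (max_le hA hB)) hC)) hD)

/-- Degree bounds for the recursively defined numerators `q_k` and
denominators `r_k` of the derivatives `d^k y/dx^k` along the curve `P(x,y)=0`. -/
theorem stmt4 (p : ℕ) [Fact p.Prime] (m n : ℕ) (hm : 1 ≤ m) (hn : 1 ≤ n)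
    (P : MvPolynomial (Fin 2) (ZMod p))
    (hPx : degreeOf 0 P ≤ m) (hPy : degreeOf 1 P ≤ n)
    (q r : ℕ → MvPolynomial (Fin 2) (ZMod p))
    (hq1 : q 1 = - pderiv 0 P) (hr1 : r 1 = pderiv 1 P)
    (hqrec : ∀ k, 1 ≤ k →
      q (k + 1) =
        pderiv 0 (q k) * (pderiv 1 P) ^ 2
        - pderiv 1 (q k) * pderiv 0 P * pderiv 1 P
        - ((2 * k - 1 : ℕ) : ZMod p) • (q k * pderiv 1 (pderiv 0 P) * pderiv 1 P)
        + ((2 * k - 1 : ℕ) : ZMod p) • (q k * pderiv 1 (pderiv 1 P) * pderiv 0 P))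
    (hrrec : ∀ k, 1 ≤ k → r (k + 1) = r k * (pderiv 1 P) ^ 2) :
    ∀ k, 1 ≤ k →
      degreeOf 0 (q k) ≤ (2 * k - 1) * m - k ∧
      degreeOf 1 (q k) ≤ (2 * k - 1) * n - k + 1 ∧
      degreeOf 0 (r k) ≤ (2 * k - 1) * m ∧
      degreeOf 1 (r k) ≤ (2 * k - 1) * (n - 1) := by
  have hPx0 : degreeOf 0 (pderiv 0 P) ≤ m - 1 :=
    (degreeOf_pderiv_self_le' 0 P).trans (Nat.sub_le_sub_right hPx 1)
  have hPx1 : degreeOf 1 (pderiv 0 P) ≤ n := (degreeOf_pderiv_le' 0 1 P).trans hPy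
  have hPy0 : degreeOf 0 (pderiv 1 P) ≤ m := (degreeOf_pderiv_le' 1 0 P).trans hPx
  have hPy1 : degreeOf 1 (pderiv 1 P) ≤ n - 1 :=
    (degreeOf_pderiv_self_le' 1 P).trans (Nat.sub_le_sub_right hPy 1)
  have hXY0 : degreeOf 0 (pderiv 1 (pderiv 0 P)) ≤ m - 1 :=
    (degreeOf_pderiv_le' 1 0 _).trans hPx0
  have hXY1 : degreeOf 1 (pderiv 1 (pderiv 0 P)) ≤ n - 1 :=
    (degreeOf_pderiv_self_le' 1 _).trans (Nat.sub_le_sub_right hPx1 1)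
  have hYY0 : degreeOf 0 (pderiv 1 (pderiv 1 P)) ≤ m :=
    (degreeOf_pderiv_le' 1 0 _).trans hPy0
  have hYY1 : degreeOf 1 (pderiv 1 (pderiv 1 P)) ≤ n - 1 - 1 :=
    (degreeOf_pderiv_self_le' 1 _).trans (Nat.sub_le_sub_right hPy1 1)
  intro k hk
  induction k, hk using Nat.le_induction with
  | base =>
    simp only [hq1, hr1, degreeOf_neg]
    exact ⟨by omega, by omega, by omega, by omega⟩
  | succ k hk IH =>
    obtain ⟨IH1, IH2, IH3, IH4⟩ := IH
    have e : 2 * (k + 1) - 1 = 2 * k - 1 + 2 := by omega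
    rw [e, add_mul, add_mul, add_mul]
    obtain ⟨a, hae, ha1, ha2⟩ : ∃ a, (2 * k - 1) * m = a ∧ 2 * k - 1 ≤ a ∧ m ≤ a :=
      ⟨_, rfl, Nat.le_mul_of_pos_right _ (by omega),
        Nat.le_mul_of_pos_left _ (by omega)⟩
    obtain ⟨b, hbe, hb1, hb2⟩ : ∃ b, (2 * k - 1) * n = b ∧ 2 * k - 1 ≤ b ∧ n ≤ b :=
      ⟨_, rfl, Nat.le_mul_of_pos_right _ (by omega),
        Nat.le_mul_of_pos_left _ (by omega)⟩
    obtain ⟨c, hce⟩ : ∃ c, (2 * k - 1) * (n - 1) = c := ⟨_, rfl⟩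
    rw [hae] at IH1 IH3 ⊢
    rw [hbe] at IH2 ⊢
    rw [hce] at IH4 ⊢
    clear hae hbe hce
    have hq0 : degreeOf 0 (pderiv 0 (q k)) ≤ a - k - 1 :=
      (degreeOf_pderiv_self_le' 0 _).trans (Nat.sub_le_sub_right IH1 1)
    have hq0' : degreeOf 0 (pderiv 1 (q k)) ≤ a - k :=
      (degreeOf_pderiv_le' 1 0 _).trans IH1
    have hq1' : degreeOf 1 (pderiv 0 (q k)) ≤ b - k + 1 :=
      (degreeOf_pderiv_le' 0 1 _).trans IH2
    have hq1'' : degreeOf 1 (pderiv 1 (q k)) ≤ b - k + 1 - 1 :=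
      (degreeOf_pderiv_self_le' 1 _).trans (Nat.sub_le_sub_right IH2 1)
    have hpow0 : degreeOf 0 ((pderiv 1 P) ^ 2) ≤ 2 * m :=
      (degreeOf_pow_le _ _ _).trans (by omega)
    have hpow1 : degreeOf 1 ((pderiv 1 P) ^ 2) ≤ 2 * (n - 1) :=
      (degreeOf_pow_le _ _ _).trans (by omega)
    refine ⟨?_, ?_, ?_, ?_⟩
    · rw [hqrec k hk]
      refine deg_comb' 0 _ _ _ _ _ ?_ ?_ ?_ ?_
      · by_cases hz : pderiv 0 (q k) = 0
        · rw [hz, zero_mul]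
          simp only [degreeOf_zero]
          exact Nat.zero_le _
        · have h1 : 1 ≤ degreeOf 0 (q k) := by
            by_contra h
            exact hz (pderiv_eq_zero_of_degreeOf_eq_zero' _ _ (by omega))
          exact (degreeOf_mul_le _ _ _).trans (by omega)
      · exact (degreeOf_mul3_le' _ _ _ _).trans (by omega)
      · refine (degreeOf_smul_le' _ _ _).trans ((degreeOf_mul3_le' _ _ _ _).trans ?_)
        omega
      · refine (degreeOf_smul_le' _ _ _).trans ((degreeOf_mul3_le' _ _ _ _).trans ?_)
        omega
    · rw [hqrec k hk]
      refine deg_comb' 1 _ _ _ _ _ ?_ ?_ ?_ ?_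
      · exact (degreeOf_mul_le _ _ _).trans (by omega)
      · exact (degreeOf_mul3_le' _ _ _ _).trans (by omega)
      · refine (degreeOf_smul_le' _ _ _).trans ((degreeOf_mul3_le' _ _ _ _).trans ?_)
        omega
      · refine (degreeOf_smul_le' _ _ _).trans ((degreeOf_mul3_le' _ _ _ _).trans ?_)
        omega
    · rw [hrrec k hk]
      exact (degreeOf_mul_le _ _ _).trans (by omega)
    · rw [hrrec k hk]
      exact (degreeOf_mul_le _ _ _).trans (by omega)
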